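/- Every snake graph has exactly two perfect matchings consisting entirely of boundary edges. -/

import Mathlib

/-- `v` is one of the four corners of the unit square tile with lower-left corner `c`. -/
def IsTileCorner (v c : ℤ × ℤ) : Prop :=
  v = c ∨ v = c + (1, 0) ∨ v = c + (0, 1) ∨ v = c + (1, 1)

/-- Two lattice points at distance one (joined by a horizontal or vertical unit edge). -/
def UnitAdj (u v : ℤ × ℤ) : Prop :=
  u - v = (1, 0) ∨ v - u = (1, 0) ∨ u - v = (0, 1) ∨ v - u = (0, 1)

/-- Lower-left corner of the `k`-th tile of the snake graph determined by the gluing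
directions `dirs` (`true` = next tile to the east, `false` = next tile to the north).
A snake graph with `d` tiles corresponds to a list `dirs` of length `d - 1`. -/
def snakeCorner (dirs : List Bool) (k : ℕ) : ℤ × ℤ :=
  ((dirs.take k).map (fun b => if b then ((1 : ℤ), (0 : ℤ)) else (0, 1))).sum

/-- The vertices of the snake graph with gluing directions `dirs`. -/
def snakeVerts (dirs : List Bool) : Set (ℤ × ℤ) :=
  {v | ∃ k ≤ dirs.length, IsTileCorner v (snakeCorner dirs k)}

/-- The snake graph with gluing directions `dirs`: edges are the unit sides of the tiles. -/
def snakeGraph (dirs : List Bool) : SimpleGraph (snakeVerts dirs) where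
  Adj u v := UnitAdj u.1 v.1 ∧
    ∃ k ≤ dirs.length, IsTileCorner u.1 (snakeCorner dirs k) ∧ IsTileCorner v.1 (snakeCorner dirs k)
  symm := by
    constructor
    rintro u v ⟨h1, k, hk, hu, hv⟩
    refine ⟨?_, k, hk, hv, hu⟩
    unfold UnitAdj at h1 ⊢
    tauto
  loopless := by
    constructor
    rintro v ⟨h1, -⟩
    rcases h1 with h | h | h | h <;> simp [Prod.ext_iff] at h

/-- An edge `{u, v}` is a boundary edge if it is a side of exactly one tile,
i.e. any two tiles having both `u` and `v` as corners coincide. -/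
def IsBoundaryEdge (dirs : List Bool) (u v : ℤ × ℤ) : Prop :=
  ∀ k k', k ≤ dirs.length → k' ≤ dirs.length →
    IsTileCorner u (snakeCorner dirs k) → IsTileCorner v (snakeCorner dirs k) →
    IsTileCorner u (snakeCorner dirs k') → IsTileCorner v (snakeCorner dirs k') → k = k'

namespace SnakeAux

lemma corner_iff (v c : ℤ × ℤ) : IsTileCorner v c ↔
    (v.1 = c.1 ∨ v.1 = c.1 + 1) ∧ (v.2 = c.2 ∨ v.2 = c.2 + 1) := by
  simp only [IsTileCorner, Prod.ext_iff, Prod.fst_add, Prod.snd_add]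
  norm_num
  omega

lemma unitAdj_iff (u v : ℤ × ℤ) : UnitAdj u v ↔
    (u.1 = v.1 ∧ (u.2 = v.2 + 1 ∨ v.2 = u.2 + 1)) ∨
    (u.2 = v.2 ∧ (u.1 = v.1 + 1 ∨ v.1 = u.1 + 1)) := by
  simp only [UnitAdj, Prod.ext_iff, Prod.fst_sub, Prod.snd_sub]
  norm_num
  omega

lemma sum_coords (l : List Bool) :
    ((l.map (fun b : Bool => if b then ((1 : ℤ), (0 : ℤ)) else (0, 1))).sum).1 +
    ((l.map (fun b : Bool => if b then ((1 : ℤ), (0 : ℤ)) else (0, 1))).sum).2 = l.length := by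
  induction l with
  | nil => simp
  | cons a l ih =>
    cases a <;> simp [List.sum_cons, Prod.fst_add, Prod.snd_add] <;> omega

lemma sum_nonneg (l : List Bool) :
    0 ≤ ((l.map (fun b : Bool => if b then ((1 : ℤ), (0 : ℤ)) else (0, 1))).sum).1 ∧
    0 ≤ ((l.map (fun b : Bool => if b then ((1 : ℤ), (0 : ℤ)) else (0, 1))).sum).2 := by
  induction l with
  | nil => simp
  | cons a l ih =>
    cases a <;> simp [List.sum_cons, Prod.fst_add, Prod.snd_add] <;> omega

lemma snakeCorner_sum (dirs : List Bool) {k : ℕ} (hk : k ≤ dirs.length) :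
    (snakeCorner dirs k).1 + (snakeCorner dirs k).2 = (k : ℤ) := by
  have h := sum_coords (dirs.take k)
  rw [List.length_take] at h
  simpa [snakeCorner, Nat.min_eq_left hk] using h

lemma snakeCorner_mono (dirs : List Bool) {j k : ℕ} (h : j ≤ k) :
    (snakeCorner dirs j).1 ≤ (snakeCorner dirs k).1 ∧
    (snakeCorner dirs j).2 ≤ (snakeCorner dirs k).2 := by
  have hsplit := List.take_append_drop j (dirs.take k)
  rw [List.take_take, Nat.min_eq_left h] at hsplit
  have h2 : snakeCorner dirs k =
      snakeCorner dirs j +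
      (((dirs.take k).drop j).map (fun b : Bool => if b then ((1 : ℤ), (0 : ℤ)) else (0, 1))).sum := by
    conv_lhs => rw [snakeCorner, ← hsplit]
    rw [List.map_append, List.sum_append]; rfl
  have hnn := sum_nonneg ((dirs.take k).drop j)
  rw [h2]
  simp only [Prod.fst_add, Prod.snd_add]
  omega

lemma snakeCorner_append (dirs : List Bool) (b : Bool) {k : ℕ} (hk : k ≤ dirs.length) :
    snakeCorner (dirs ++ [b]) k = snakeCorner dirs k := by
  rw [snakeCorner, snakeCorner, List.take_append_of_le_length hk]

def mv (b : Bool) : ℤ × ℤ := if b then (1, 0) else (0, 1)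

lemma snakeCorner_append_last (dirs : List Bool) (b : Bool) :
    snakeCorner (dirs ++ [b]) (dirs.length + 1) =
      snakeCorner dirs dirs.length + mv b := by
  rw [snakeCorner, snakeCorner, mv]
  rw [List.take_of_length_le (by simp), List.take_of_length_le (by simp)]
  simp

/-! ### Step setup -/

def C (dirs : List Bool) (b : Bool) : ℤ × ℤ := snakeCorner dirs dirs.length + mv b
def G2 (dirs : List Bool) (b : Bool) : ℤ × ℤ := C dirs b + mv (!b)
def P (dirs : List Bool) (b : Bool) : ℤ × ℤ := C dirs b + mv b
def Q (dirs : List Bool) (b : Bool) : ℤ × ℤ := C dirs b + mv b + mv (!b)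

lemma corner_last (dirs : List Bool) (b : Bool) :
    snakeCorner (dirs ++ [b]) (dirs.length + 1) = C dirs b :=
  snakeCorner_append_last dirs b

/-- membership of verts -/
lemma mem_verts {dirs : List Bool} {k : ℕ} {u : ℤ × ℤ} (hk : k ≤ dirs.length)
    (h : IsTileCorner u (snakeCorner dirs k)) : u ∈ snakeVerts dirs := ⟨k, hk, h⟩

lemma vert_bound {dirs : List Bool} {u : ℤ × ℤ} (hu : u ∈ snakeVerts dirs) :
    u.1 ≤ (snakeCorner dirs dirs.length).1 + 1 ∧
    u.2 ≤ (snakeCorner dirs dirs.length).2 + 1 := by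
  obtain ⟨k, hk, h⟩ := hu
  have hm := snakeCorner_mono dirs hk
  rw [corner_iff] at h
  omega

lemma P_not_old (dirs : List Bool) (b : Bool) : P dirs b ∉ snakeVerts dirs := by
  intro h
  have := vert_bound h
  cases b <;> simp [P, C, mv, Prod.fst_add, Prod.snd_add] at this <;> omega

lemma Q_not_old (dirs : List Bool) (b : Bool) : Q dirs b ∉ snakeVerts dirs := by
  intro h
  have := vert_bound h
  cases b <;> simp [Q, C, mv, Prod.fst_add, Prod.snd_add] at this <;> omega

/-- corner forcing for P -/
lemma P_forces {dirs : List Bool} {b : Bool} {k : ℕ} (hk : k ≤ dirs.length + 1)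
    (h : IsTileCorner (P dirs b) (snakeCorner (dirs ++ [b]) k)) : k = dirs.length + 1 := by
  by_contra hne
  have hk' : k ≤ dirs.length := by omega
  rw [snakeCorner_append dirs b hk'] at h
  exact P_not_old dirs b (mem_verts hk' h)

lemma Q_forces {dirs : List Bool} {b : Bool} {k : ℕ} (hk : k ≤ dirs.length + 1)
    (h : IsTileCorner (Q dirs b) (snakeCorner (dirs ++ [b]) k)) : k = dirs.length + 1 := by
  by_contra hne
  have hk' : k ≤ dirs.length := by omega
  rw [snakeCorner_append dirs b hk'] at h
  exact Q_not_old dirs b (mem_verts hk' h)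

/-- the four corners of the new tile -/
lemma new_tile_corners {dirs : List Bool} {b : Bool} {u : ℤ × ℤ}
    (h : IsTileCorner u (C dirs b)) :
    u = C dirs b ∨ u = G2 dirs b ∨ u = P dirs b ∨ u = Q dirs b := by
  rw [corner_iff] at h
  cases b <;>
    simp [C, G2, P, Q, mv, Prod.ext_iff, Prod.fst_add, Prod.snd_add] at * <;> omega

/-- C and G2 are corners of the old last tile and of the new tile -/
lemma C_corner_old (dirs : List Bool) (b : Bool) :
    IsTileCorner (C dirs b) (snakeCorner dirs dirs.length) := by
  rw [corner_iff]; cases b <;> simp [C, mv] <;> omega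

lemma G2_corner_old (dirs : List Bool) (b : Bool) :
    IsTileCorner (G2 dirs b) (snakeCorner dirs dirs.length) := by
  rw [corner_iff]; cases b <;> simp [G2, C, mv] <;> omega

lemma C_corner_new (dirs : List Bool) (b : Bool) : IsTileCorner (C dirs b) (C dirs b) := by
  rw [corner_iff]; omega

lemma G2_corner_new (dirs : List Bool) (b : Bool) : IsTileCorner (G2 dirs b) (C dirs b) := by
  rw [corner_iff]; cases b <;> simp [G2, C, mv] <;> omega

lemma P_corner_new (dirs : List Bool) (b : Bool) : IsTileCorner (P dirs b) (C dirs b) := by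
  rw [corner_iff]; cases b <;> simp [P, C, mv] <;> omega

lemma Q_corner_new (dirs : List Bool) (b : Bool) : IsTileCorner (Q dirs b) (C dirs b) := by
  rw [corner_iff]; cases b <;> simp [Q, C, mv] <;> omega

/-- forcing for the glued edge: both C and G2 corners of old tile k implies k = length -/
lemma glue_forces {dirs : List Bool} {b : Bool} {k : ℕ} (hk : k ≤ dirs.length)
    (h2 : IsTileCorner (G2 dirs b) (snakeCorner dirs k)) : k = dirs.length := by
  have hs := snakeCorner_sum dirs hk
  have hs2 := snakeCorner_sum dirs (le_refl dirs.length)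
  rw [corner_iff] at h2
  cases b <;> simp [G2, C, mv, Prod.fst_add, Prod.snd_add] at h2 <;> omega

/-- glued edge is boundary for dirs -/
lemma glue_boundary (dirs : List Bool) (b : Bool) :
    IsBoundaryEdge dirs (C dirs b) (G2 dirs b) := by
  intro k k' hk hk' _ h2 _ h2'
  rw [glue_forces hk h2, glue_forces hk' h2']

/-- new vertices: decomposition -/
lemma verts_append {dirs : List Bool} {b : Bool} {v : ℤ × ℤ} :
    v ∈ snakeVerts (dirs ++ [b]) ↔ v ∈ snakeVerts dirs ∨ v = P dirs b ∨ v = Q dirs b := by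
  constructor
  · rintro ⟨k, hk, h⟩
    simp only [List.length_append, List.length_singleton] at hk
    rcases Nat.lt_or_ge k (dirs.length + 1) with hlt | hge
    · left
      have hk' : k ≤ dirs.length := by omega
      rw [snakeCorner_append dirs b hk'] at h
      exact mem_verts hk' h
    · have hke : k = dirs.length + 1 := by omega
      subst hke
      rw [corner_last] at h
      rcases new_tile_corners h with h | h | h | h
      · exact Or.inl (h ▸ mem_verts (le_refl _) (C_corner_old dirs b))
      · exact Or.inl (h ▸ mem_verts (le_refl _) (G2_corner_old dirs b))
      · exact Or.inr (Or.inl h)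
      · exact Or.inr (Or.inr h)
  · rintro (⟨k, hk, h⟩ | rfl | rfl)
    · exact ⟨k, by simp; omega, by rw [snakeCorner_append dirs b hk]; exact h⟩
    · exact ⟨dirs.length + 1, by simp, by rw [corner_last]; exact P_corner_new dirs b⟩
    · exact ⟨dirs.length + 1, by simp, by rw [corner_last]; exact Q_corner_new dirs b⟩

lemma old_mem_append {dirs : List Bool} {b : Bool} {v : ℤ × ℤ} (h : v ∈ snakeVerts dirs) :
    v ∈ snakeVerts (dirs ++ [b]) := verts_append.2 (Or.inl h)


/-! ### Edges and good matchings -/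

def EdgeOK (dirs : List Bool) (e : Sym2 (ℤ × ℤ)) : Prop :=
  ∃ u v, e = s(u, v) ∧ UnitAdj u v ∧
    (∃ k ≤ dirs.length, IsTileCorner u (snakeCorner dirs k) ∧ IsTileCorner v (snakeCorner dirs k)) ∧
    IsBoundaryEdge dirs u v

def Good (dirs : List Bool) (E : Set (Sym2 (ℤ × ℤ))) : Prop :=
  (∀ e ∈ E, EdgeOK dirs e) ∧ ∀ v ∈ snakeVerts dirs, ∃! e, e ∈ E ∧ v ∈ e

lemma unit_ne {u v : ℤ × ℤ} (h : UnitAdj u v) : u ≠ v := by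
  rintro rfl
  rw [unitAdj_iff] at h
  omega

lemma side_cases {u v c : ℤ × ℤ} (hu : IsTileCorner u c) (hv : IsTileCorner v c)
    (huv : UnitAdj u v) :
    s(u, v) = s(c, c + (1, 0)) ∨ s(u, v) = s(c + (0, 1), c + (1, 1)) ∨
    s(u, v) = s(c, c + (0, 1)) ∨ s(u, v) = s(c + (1, 0), c + (1, 1)) := by
  rw [unitAdj_iff] at huv
  rcases hu with rfl | rfl | rfl | rfl <;> rcases hv with rfl | rfl | rfl | rfl <;>
  first
    | exact Or.inl rfl
    | exact Or.inl Sym2.eq_swap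
    | exact Or.inr (Or.inl rfl)
    | exact Or.inr (Or.inl Sym2.eq_swap)
    | exact Or.inr (Or.inr (Or.inl rfl))
    | exact Or.inr (Or.inr (Or.inl Sym2.eq_swap))
    | exact Or.inr (Or.inr (Or.inr rfl))
    | exact Or.inr (Or.inr (Or.inr Sym2.eq_swap))
    | (exfalso; revert huv;
       simp only [Prod.ext_iff, Prod.fst_add, Prod.snd_add, Prod.mk.injEq]; omega)

lemma prod_add_ext {a b c d e f : ℤ} : ((a,b) : ℤ × ℤ) + (c,d) + (e,f) = (a+c+e, b+d+f) := by
  simp [Prod.ext_iff]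

lemma new_side_cases {dirs : List Bool} {b : Bool} {u v : ℤ × ℤ}
    (hu : IsTileCorner u (C dirs b)) (hv : IsTileCorner v (C dirs b)) (huv : UnitAdj u v) :
    s(u, v) = s(C dirs b, G2 dirs b) ∨ s(u, v) = s(C dirs b, P dirs b) ∨
    s(u, v) = s(G2 dirs b, Q dirs b) ∨ s(u, v) = s(P dirs b, Q dirs b) := by
  have hs := side_cases hu hv huv
  cases b
  · rw [show C dirs false + ((1 : ℤ), (0 : ℤ)) = G2 dirs false by simp [G2, mv],
      show C dirs false + ((0 : ℤ), (1 : ℤ)) = P dirs false by simp [P, mv],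
      show C dirs false + ((1 : ℤ), (1 : ℤ)) = Q dirs false by
        simp [Q, mv, Prod.ext_iff]] at hs
    tauto
  · rw [show C dirs true + ((1 : ℤ), (0 : ℤ)) = P dirs true by simp [P, mv],
      show C dirs true + ((0 : ℤ), (1 : ℤ)) = G2 dirs true by simp [G2, mv],
      show C dirs true + ((1 : ℤ), (1 : ℤ)) = Q dirs true by
        simp [Q, mv, Prod.ext_iff]] at hs
    tauto

lemma ne_pts (dirs : List Bool) (b : Bool) :
    C dirs b ≠ G2 dirs b ∧ C dirs b ≠ P dirs b ∧ C dirs b ≠ Q dirs b ∧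
    G2 dirs b ≠ P dirs b ∧ G2 dirs b ≠ Q dirs b ∧ P dirs b ≠ Q dirs b := by
  cases b <;> simp [C, G2, P, Q, mv, Prod.ext_iff] <;> omega

lemma unit_CG2 (dirs : List Bool) (b : Bool) : UnitAdj (C dirs b) (G2 dirs b) := by
  rw [unitAdj_iff]; cases b <;> simp [C, G2, mv] <;> omega

lemma unit_CP (dirs : List Bool) (b : Bool) : UnitAdj (C dirs b) (P dirs b) := by
  rw [unitAdj_iff]; cases b <;> simp [C, P, mv] <;> omega

lemma unit_G2Q (dirs : List Bool) (b : Bool) : UnitAdj (G2 dirs b) (Q dirs b) := by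
  rw [unitAdj_iff]; cases b <;> simp [C, G2, Q, mv] <;> omega

lemma unit_PQ (dirs : List Bool) (b : Bool) : UnitAdj (P dirs b) (Q dirs b) := by
  rw [unitAdj_iff]; cases b <;> simp [C, P, Q, mv] <;> omega

lemma len_append (dirs : List Bool) (b : Bool) : (dirs ++ [b]).length = dirs.length + 1 := by
  simp

/-- a1 is OK in the extended snake -/
lemma edgeOK_a1 (dirs : List Bool) (b : Bool) :
    EdgeOK (dirs ++ [b]) s(C dirs b, P dirs b) := by
  refine ⟨_, _, rfl, unit_CP dirs b, ⟨dirs.length + 1, by simp, ?_, ?_⟩, ?_⟩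
  · rw [corner_last]; exact C_corner_new dirs b
  · rw [corner_last]; exact P_corner_new dirs b
  · intro k k' hk hk' _ hP _ hP'
    rw [len_append] at hk hk'
    rw [P_forces hk hP, P_forces hk' hP']

lemma edgeOK_a2 (dirs : List Bool) (b : Bool) :
    EdgeOK (dirs ++ [b]) s(G2 dirs b, Q dirs b) := by
  refine ⟨_, _, rfl, unit_G2Q dirs b, ⟨dirs.length + 1, by simp, ?_, ?_⟩, ?_⟩
  · rw [corner_last]; exact G2_corner_new dirs b
  · rw [corner_last]; exact Q_corner_new dirs b
  · intro k k' hk hk' _ hQ _ hQ'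
    rw [len_append] at hk hk'
    rw [Q_forces hk hQ, Q_forces hk' hQ']

lemma edgeOK_f (dirs : List Bool) (b : Bool) :
    EdgeOK (dirs ++ [b]) s(P dirs b, Q dirs b) := by
  refine ⟨_, _, rfl, unit_PQ dirs b, ⟨dirs.length + 1, by simp, ?_, ?_⟩, ?_⟩
  · rw [corner_last]; exact P_corner_new dirs b
  · rw [corner_last]; exact Q_corner_new dirs b
  · intro k k' hk hk' hP _ hP' _
    rw [len_append] at hk hk'
    rw [P_forces hk hP, P_forces hk' hP']

lemma edgeOK_g_old (dirs : List Bool) (b : Bool) :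
    EdgeOK dirs s(C dirs b, G2 dirs b) :=
  ⟨_, _, rfl, unit_CG2 dirs b,
    ⟨dirs.length, le_refl _, C_corner_old dirs b, G2_corner_old dirs b⟩, glue_boundary dirs b⟩

/-- the glued edge cannot belong to a good matching of the extended snake -/
lemma g_not_mem {dirs : List Bool} {b : Bool} {E' : Set (Sym2 (ℤ × ℤ))}
    (hE' : Good (dirs ++ [b]) E') : s(C dirs b, G2 dirs b) ∉ E' := by
  intro hmem
  obtain ⟨u, v, he, huv, -, hbd⟩ := hE'.1 _ hmem
  have c1 : IsTileCorner (C dirs b) (snakeCorner (dirs ++ [b]) dirs.length) := by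
    rw [snakeCorner_append dirs b (le_refl _)]; exact C_corner_old dirs b
  have c2 : IsTileCorner (G2 dirs b) (snakeCorner (dirs ++ [b]) dirs.length) := by
    rw [snakeCorner_append dirs b (le_refl _)]; exact G2_corner_old dirs b
  have c3 : IsTileCorner (C dirs b) (snakeCorner (dirs ++ [b]) (dirs.length + 1)) := by
    rw [corner_last]; exact C_corner_new dirs b
  have c4 : IsTileCorner (G2 dirs b) (snakeCorner (dirs ++ [b]) (dirs.length + 1)) := by
    rw [corner_last]; exact G2_corner_new dirs b
  rw [Sym2.eq_iff] at he
  rcases he with ⟨h1, h2⟩ | ⟨h1, h2⟩ <;> subst h1 <;> subst h2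
  · exact absurd (hbd dirs.length (dirs.length + 1) (by simp) (by simp) c1 c2 c3 c4) (by omega)
  · exact absurd (hbd dirs.length (dirs.length + 1) (by simp) (by simp) c2 c1 c4 c3) (by omega)

/-- edges of a good matching have endpoints among the vertices -/
lemma good_endpoint {dirs : List Bool} {E : Set (Sym2 (ℤ × ℤ))} (hE : Good dirs E)
    {e : Sym2 (ℤ × ℤ)} (he : e ∈ E) {x : ℤ × ℤ} (hx : x ∈ e) : x ∈ snakeVerts dirs := by
  obtain ⟨u, v, rfl, -, ⟨k, hk, hu, hv⟩, -⟩ := hE.1 _ he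
  rw [Sym2.mem_iff] at hx
  rcases hx with rfl | rfl
  · exact mem_verts hk hu
  · exact mem_verts hk hv

lemma edgeOK_descend {dirs : List Bool} {b : Bool} {e : Sym2 (ℤ × ℤ)}
    (h : EdgeOK (dirs ++ [b]) e)
    (h1 : e ≠ s(C dirs b, G2 dirs b)) (h2 : e ≠ s(C dirs b, P dirs b))
    (h3 : e ≠ s(G2 dirs b, Q dirs b)) (h4 : e ≠ s(P dirs b, Q dirs b)) :
    EdgeOK dirs e := by
  obtain ⟨u, v, rfl, huv, ⟨k, hk, hu, hv⟩, hbd⟩ := h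
  rw [len_append] at hk
  have hk' : k ≤ dirs.length := by
    rcases Nat.lt_or_ge k (dirs.length + 1) with h | h
    · omega
    · exfalso
      have hke : k = dirs.length + 1 := by omega
      subst hke
      rw [corner_last] at hu hv
      rcases new_side_cases hu hv huv with h | h | h | h <;> tauto
  rw [snakeCorner_append dirs b hk'] at hu hv
  refine ⟨u, v, rfl, huv, ⟨k, hk', hu, hv⟩, ?_⟩
  intro k1 k2 hk1 hk2 hu1 hv1 hu2 hv2
  refine hbd k1 k2 (by simp; omega) (by simp; omega) ?_ ?_ ?_ ?_ <;>
    rw [snakeCorner_append dirs b (by omega)] <;> assumption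

lemma edgeOK_ascend {dirs : List Bool} {b : Bool} {e : Sym2 (ℤ × ℤ)}
    (h : EdgeOK dirs e) (hg : e ≠ s(C dirs b, G2 dirs b)) :
    EdgeOK (dirs ++ [b]) e := by
  obtain ⟨u, v, rfl, huv, ⟨k, hk, hu, hv⟩, hbd⟩ := h
  have huold : u ∈ snakeVerts dirs := mem_verts hk hu
  have hvold : v ∈ snakeVerts dirs := mem_verts hk hv
  have key : ∀ k1, k1 ≤ dirs.length + 1 →
      IsTileCorner u (snakeCorner (dirs ++ [b]) k1) →
      IsTileCorner v (snakeCorner (dirs ++ [b]) k1) → k1 ≤ dirs.length := by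
    intro k1 hk1 hu1 hv1
    by_contra hgt
    have hke : k1 = dirs.length + 1 := by omega
    subst hke
    rw [corner_last] at hu1 hv1
    have hu2 := new_tile_corners hu1
    have hv2 := new_tile_corners hv1
    have hPu : u ≠ P dirs b := fun h => P_not_old dirs b (h ▸ huold)
    have hQu : u ≠ Q dirs b := fun h => Q_not_old dirs b (h ▸ huold)
    have hPv : v ≠ P dirs b := fun h => P_not_old dirs b (h ▸ hvold)
    have hQv : v ≠ Q dirs b := fun h => Q_not_old dirs b (h ▸ hvold)
    have hne := unit_ne huv
    apply hg
    rw [Sym2.eq_iff]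
    rcases hu2 with rfl | rfl | h | h <;> rcases hv2 with rfl | rfl | h' | h' <;> tauto
  refine ⟨u, v, rfl, huv, ⟨k, by simp; omega, ?_, ?_⟩, ?_⟩
  · rw [snakeCorner_append dirs b hk]; exact hu
  · rw [snakeCorner_append dirs b hk]; exact hv
  · intro k1 k2 hk1 hk2 hu1 hv1 hu2 hv2
    rw [len_append] at hk1 hk2
    have h1 := key k1 hk1 hu1 hv1
    have h2 := key k2 hk2 hu2 hv2
    rw [snakeCorner_append dirs b h1] at hu1 hv1
    rw [snakeCorner_append dirs b h2] at hu2 hv2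
    exact hbd k1 k2 h1 h2 hu1 hv1 hu2 hv2

/-- which edges of a good extended matching contain P -/
lemma edge_at_P {dirs : List Bool} {b : Bool} {e : Sym2 (ℤ × ℤ)}
    (h : EdgeOK (dirs ++ [b]) e) (hp : P dirs b ∈ e) :
    e = s(C dirs b, P dirs b) ∨ e = s(P dirs b, Q dirs b) := by
  obtain ⟨u, v, rfl, huv, ⟨k, hk, hu, hv⟩, hbd⟩ := h
  rw [len_append] at hk
  obtain ⟨n1, n2, n3, n4, n5, n6⟩ := ne_pts dirs b
  have hk1 : k = dirs.length + 1 := by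
    have hp' := hp
    rw [Sym2.mem_iff] at hp'
    rcases hp' with rfl | rfl
    · exact P_forces hk hu
    · exact P_forces hk hv
  subst hk1
  rw [corner_last] at hu hv
  rcases new_side_cases hu hv huv with h | h | h | h <;> rw [h] at hp ⊢ <;>
    rw [Sym2.mem_iff] at hp
  · rcases hp with h' | h'
    · exact absurd h' (Ne.symm n2)
    · exact absurd h' (Ne.symm n4)
  · exact Or.inl rfl
  · rcases hp with h' | h'
    · exact absurd h' (Ne.symm n4)
    · exact absurd h' n6
  · exact Or.inr rfl

lemma edge_at_Q {dirs : List Bool} {b : Bool} {e : Sym2 (ℤ × ℤ)}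
    (h : EdgeOK (dirs ++ [b]) e) (hq : Q dirs b ∈ e) :
    e = s(G2 dirs b, Q dirs b) ∨ e = s(P dirs b, Q dirs b) := by
  obtain ⟨u, v, rfl, huv, ⟨k, hk, hu, hv⟩, hbd⟩ := h
  rw [len_append] at hk
  obtain ⟨n1, n2, n3, n4, n5, n6⟩ := ne_pts dirs b
  have hk1 : k = dirs.length + 1 := by
    have hq' := hq
    rw [Sym2.mem_iff] at hq'
    rcases hq' with rfl | rfl
    · exact Q_forces hk hu
    · exact Q_forces hk hv
  subst hk1
  rw [corner_last] at hu hv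
  rcases new_side_cases hu hv huv with h | h | h | h <;> rw [h] at hq ⊢ <;>
    rw [Sym2.mem_iff] at hq
  · rcases hq with h' | h'
    · exact absurd h' (Ne.symm n3)
    · exact absurd h' (Ne.symm n5)
  · rcases hq with h' | h'
    · exact absurd h' (Ne.symm n3)
    · exact absurd h' (Ne.symm n6)
  · exact Or.inl rfl
  · exact Or.inr rfl


/-! ### The step bijection -/

lemma ne_edges (dirs : List Bool) (b : Bool) :
    s(C dirs b, G2 dirs b) ≠ s(C dirs b, P dirs b) ∧
    s(C dirs b, G2 dirs b) ≠ s(G2 dirs b, Q dirs b) ∧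
    s(C dirs b, G2 dirs b) ≠ s(P dirs b, Q dirs b) ∧
    s(C dirs b, P dirs b) ≠ s(G2 dirs b, Q dirs b) ∧
    s(C dirs b, P dirs b) ≠ s(P dirs b, Q dirs b) ∧
    s(G2 dirs b, Q dirs b) ≠ s(P dirs b, Q dirs b) := by
  obtain ⟨n1, n2, n3, n4, n5, n6⟩ := ne_pts dirs b
  refine ⟨?_, ?_, ?_, ?_, ?_, ?_⟩ <;> intro h <;> rw [Sym2.eq_iff] at h
  · rcases h with ⟨-, h2⟩ | ⟨h1, -⟩; exacts [n4 h2, n2 h1]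
  · rcases h with ⟨h1, -⟩ | ⟨h1, -⟩; exacts [n1 h1, n3 h1]
  · rcases h with ⟨h1, -⟩ | ⟨h1, -⟩; exacts [n2 h1, n3 h1]
  · rcases h with ⟨h1, -⟩ | ⟨h1, -⟩; exacts [n1 h1, n3 h1]
  · rcases h with ⟨h1, -⟩ | ⟨h1, -⟩; exacts [n2 h1, n3 h1]
  · rcases h with ⟨h1, -⟩ | ⟨h1, -⟩; exacts [n4 h1, n5 h1]

lemma a1_not_old {dirs : List Bool} {b : Bool} {E : Set (Sym2 (ℤ × ℤ))} (hE : Good dirs E) :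
    s(C dirs b, P dirs b) ∉ E := fun h =>
  P_not_old dirs b (good_endpoint hE h (Sym2.mem_mk_right _ _))

lemma a2_not_old {dirs : List Bool} {b : Bool} {E : Set (Sym2 (ℤ × ℤ))} (hE : Good dirs E) :
    s(G2 dirs b, Q dirs b) ∉ E := fun h =>
  Q_not_old dirs b (good_endpoint hE h (Sym2.mem_mk_right _ _))

lemma f_not_old {dirs : List Bool} {b : Bool} {E : Set (Sym2 (ℤ × ℤ))} (hE : Good dirs E) :
    s(P dirs b, Q dirs b) ∉ E := fun h =>
  P_not_old dirs b (good_endpoint hE h (Sym2.mem_mk_left _ _))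

open Classical in
noncomputable def newE (dirs : List Bool) (b : Bool) (E : Set (Sym2 (ℤ × ℤ))) :
    Set (Sym2 (ℤ × ℤ)) :=
  if s(C dirs b, G2 dirs b) ∈ E then
    (E \ {s(C dirs b, G2 dirs b)}) ∪ {s(C dirs b, P dirs b), s(G2 dirs b, Q dirs b)}
  else E ∪ {s(P dirs b, Q dirs b)}

lemma good_newE {dirs : List Bool} {b : Bool} {E : Set (Sym2 (ℤ × ℤ))} (hE : Good dirs E) :
    Good (dirs ++ [b]) (newE dirs b E) := by
  obtain ⟨n1, n2, n3, n4, n5, n6⟩ := ne_pts dirs b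
  by_cases hg : s(C dirs b, G2 dirs b) ∈ E
  · rw [newE, if_pos hg]
    constructor
    · rintro e (⟨heE, hne⟩ | he)
      · exact edgeOK_ascend (hE.1 e heE) hne
      · rcases he with rfl | rfl
        · exact edgeOK_a1 dirs b
        · exact edgeOK_a2 dirs b
    · intro v hv
      rw [verts_append] at hv
      rcases hv with hv | rfl | rfl
      · -- old vertex
        obtain ⟨e0, ⟨he0, hv0⟩, hu0⟩ := hE.2 v hv
        have hvP : v ≠ P dirs b := fun h => P_not_old dirs b (h ▸ hv)
        have hvQ : v ≠ Q dirs b := fun h => Q_not_old dirs b (h ▸ hv)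
        by_cases hvC : v = C dirs b
        · subst hvC
          have he0g : e0 = s(C dirs b, G2 dirs b) :=
            (hu0 _ ⟨hg, Sym2.mem_mk_left _ _⟩).symm
          refine ⟨s(C dirs b, P dirs b), ⟨Or.inr (Or.inl rfl), Sym2.mem_mk_left _ _⟩, ?_⟩
          rintro e' ⟨(⟨he', hne'⟩ | he'), hmem⟩
          · exact absurd ((hu0 e' ⟨he', hmem⟩).trans he0g) hne'
          · rcases he' with rfl | rfl
            · rfl
            · rw [Sym2.mem_iff] at hmem
              rcases hmem with h | h; exacts [absurd h n1, absurd h n3]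
        · by_cases hvG : v = G2 dirs b
          · subst hvG
            have he0g : e0 = s(C dirs b, G2 dirs b) :=
              (hu0 _ ⟨hg, Sym2.mem_mk_right _ _⟩).symm
            refine ⟨s(G2 dirs b, Q dirs b), ⟨Or.inr (Or.inr rfl), Sym2.mem_mk_left _ _⟩, ?_⟩
            rintro e' ⟨(⟨he', hne'⟩ | he'), hmem⟩
            · exact absurd ((hu0 e' ⟨he', hmem⟩).trans he0g) hne'
            · rcases he' with rfl | rfl
              · rw [Sym2.mem_iff] at hmem
                rcases hmem with h | h; exacts [absurd h (Ne.symm n1), absurd h n4]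
              · rfl
          · have he0ne : e0 ≠ s(C dirs b, G2 dirs b) := by
              rintro rfl
              rw [Sym2.mem_iff] at hv0
              rcases hv0 with h | h; exacts [hvC h, hvG h]
            refine ⟨e0, ⟨Or.inl ⟨he0, he0ne⟩, hv0⟩, ?_⟩
            rintro e' ⟨(⟨he', hne'⟩ | he'), hmem⟩
            · exact hu0 e' ⟨he', hmem⟩
            · rcases he' with rfl | rfl
              · rw [Sym2.mem_iff] at hmem
                rcases hmem with h | h; exacts [absurd h hvC, absurd h hvP]
              · rw [Sym2.mem_iff] at hmem
                rcases hmem with h | h; exacts [absurd h hvG, absurd h hvQ]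
      · -- v = P
        refine ⟨s(C dirs b, P dirs b), ⟨Or.inr (Or.inl rfl), Sym2.mem_mk_right _ _⟩, ?_⟩
        rintro e' ⟨(⟨he', -⟩ | he'), hmem⟩
        · exact absurd (good_endpoint hE he' hmem) (P_not_old dirs b)
        · rcases he' with rfl | rfl
          · rfl
          · rw [Sym2.mem_iff] at hmem
            rcases hmem with h | h; exacts [absurd h (Ne.symm n4), absurd h n6]
      · -- v = Q
        refine ⟨s(G2 dirs b, Q dirs b), ⟨Or.inr (Or.inr rfl), Sym2.mem_mk_right _ _⟩, ?_⟩
        rintro e' ⟨(⟨he', -⟩ | he'), hmem⟩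
        · exact absurd (good_endpoint hE he' hmem) (Q_not_old dirs b)
        · rcases he' with rfl | rfl
          · rw [Sym2.mem_iff] at hmem
            rcases hmem with h | h; exacts [absurd h (Ne.symm n3), absurd h (Ne.symm n6)]
          · rfl
  · rw [newE, if_neg hg]
    constructor
    · rintro e (heE | he)
      · exact edgeOK_ascend (hE.1 e heE) (fun h => hg (h ▸ heE))
      · rcases he with rfl
        exact edgeOK_f dirs b
    · intro v hv
      rw [verts_append] at hv
      rcases hv with hv | rfl | rfl
      · obtain ⟨e0, ⟨he0, hv0⟩, hu0⟩ := hE.2 v hv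
        have hvP : v ≠ P dirs b := fun h => P_not_old dirs b (h ▸ hv)
        have hvQ : v ≠ Q dirs b := fun h => Q_not_old dirs b (h ▸ hv)
        refine ⟨e0, ⟨Or.inl he0, hv0⟩, ?_⟩
        rintro e' ⟨(he' | he'), hmem⟩
        · exact hu0 e' ⟨he', hmem⟩
        · rcases he' with rfl
          rw [Sym2.mem_iff] at hmem
          rcases hmem with h | h; exacts [absurd h hvP, absurd h hvQ]
      · refine ⟨s(P dirs b, Q dirs b), ⟨Or.inr rfl, Sym2.mem_mk_left _ _⟩, ?_⟩
        rintro e' ⟨(he' | he'), hmem⟩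
        · exact absurd (good_endpoint hE he' hmem) (P_not_old dirs b)
        · rcases he' with rfl; rfl
      · refine ⟨s(P dirs b, Q dirs b), ⟨Or.inr rfl, Sym2.mem_mk_right _ _⟩, ?_⟩
        rintro e' ⟨(he' | he'), hmem⟩
        · exact absurd (good_endpoint hE he' hmem) (Q_not_old dirs b)
        · rcases he' with rfl; rfl


lemma good_restrict {dirs : List Bool} {b : Bool} {E' : Set (Sym2 (ℤ × ℤ))}
    (hE' : Good (dirs ++ [b]) E') : ∃ E, Good dirs E ∧ newE dirs b E = E' := by
  obtain ⟨n1, n2, n3, n4, n5, n6⟩ := ne_pts dirs b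
  obtain ⟨m1, m2, m3, m4, m5, m6⟩ := ne_edges dirs b
  have hgE' : s(C dirs b, G2 dirs b) ∉ E' := g_not_mem hE'
  have hPmem : P dirs b ∈ snakeVerts (dirs ++ [b]) := verts_append.2 (Or.inr (Or.inl rfl))
  have hQmem : Q dirs b ∈ snakeVerts (dirs ++ [b]) := verts_append.2 (Or.inr (Or.inr rfl))
  obtain ⟨eP, ⟨hePE, hPeP⟩, huP⟩ := hE'.2 _ hPmem
  obtain ⟨eQ, ⟨heQE, hQeQ⟩, huQ⟩ := hE'.2 _ hQmem
  by_cases hf : s(P dirs b, Q dirs b) ∈ E'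
  · have ha1 : s(C dirs b, P dirs b) ∉ E' := by
      intro h
      have hx1 := huP _ ⟨h, Sym2.mem_mk_right _ _⟩
      have hx2 := huP _ ⟨hf, Sym2.mem_mk_left _ _⟩
      exact m5 (hx1.trans hx2.symm)
    have ha2 : s(G2 dirs b, Q dirs b) ∉ E' := by
      intro h
      have hx1 := huQ _ ⟨h, Sym2.mem_mk_right _ _⟩
      have hx2 := huQ _ ⟨hf, Sym2.mem_mk_right _ _⟩
      exact m6 (hx1.trans hx2.symm)
    refine ⟨E' \ {s(P dirs b, Q dirs b)}, ⟨?_, ?_⟩, ?_⟩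
    · rintro e ⟨heE, hne⟩
      refine edgeOK_descend (hE'.1 e heE) ?_ ?_ ?_ hne
      · rintro rfl; exact hgE' heE
      · rintro rfl; exact ha1 heE
      · rintro rfl; exact ha2 heE
    · intro v hv
      have hvP : v ≠ P dirs b := fun h => P_not_old dirs b (h ▸ hv)
      have hvQ : v ≠ Q dirs b := fun h => Q_not_old dirs b (h ▸ hv)
      obtain ⟨e0, ⟨he0, hv0⟩, hu0⟩ := hE'.2 v (old_mem_append hv)
      have h0ne : e0 ≠ s(P dirs b, Q dirs b) := by
        rintro rfl
        rw [Sym2.mem_iff] at hv0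
        rcases hv0 with h | h; exacts [hvP h, hvQ h]
      refine ⟨e0, ⟨⟨he0, h0ne⟩, hv0⟩, ?_⟩
      rintro e' ⟨⟨he', -⟩, hmem⟩
      exact hu0 e' ⟨he', hmem⟩
    · have hgE : s(C dirs b, G2 dirs b) ∉ E' \ {s(P dirs b, Q dirs b)} := fun h => hgE' h.1
      rw [newE, if_neg hgE, Set.diff_union_self,
        Set.union_eq_self_of_subset_right (Set.singleton_subset_iff.2 hf)]
  · have heP1 : eP = s(C dirs b, P dirs b) := by
      rcases edge_at_P (hE'.1 _ hePE) hPeP with h | h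
      · exact h
      · exact absurd (h ▸ hePE) hf
    have heQ1 : eQ = s(G2 dirs b, Q dirs b) := by
      rcases edge_at_Q (hE'.1 _ heQE) hQeQ with h | h
      · exact h
      · exact absurd (h ▸ heQE) hf
    have ha1 : s(C dirs b, P dirs b) ∈ E' := heP1 ▸ hePE
    have ha2 : s(G2 dirs b, Q dirs b) ∈ E' := heQ1 ▸ heQE
    refine ⟨(E' \ {s(C dirs b, P dirs b), s(G2 dirs b, Q dirs b)}) ∪ {s(C dirs b, G2 dirs b)},
      ⟨?_, ?_⟩, ?_⟩
    · rintro e (⟨heE, hne⟩ | rfl)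
      · rw [Set.mem_insert_iff, not_or, Set.mem_singleton_iff] at hne
        exact edgeOK_descend (hE'.1 e heE) (by rintro rfl; exact hgE' heE) hne.1 hne.2
          (by rintro rfl; exact hf heE)
      · exact edgeOK_g_old dirs b
    · intro v hv
      have hvP : v ≠ P dirs b := fun h => P_not_old dirs b (h ▸ hv)
      have hvQ : v ≠ Q dirs b := fun h => Q_not_old dirs b (h ▸ hv)
      obtain ⟨e0, ⟨he0, hv0⟩, hu0⟩ := hE'.2 v (old_mem_append hv)
      by_cases hvC : v = C dirs b
      · subst hvC
        have he0a1 : e0 = s(C dirs b, P dirs b) :=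
          (hu0 _ ⟨ha1, Sym2.mem_mk_left _ _⟩).symm
        refine ⟨s(C dirs b, G2 dirs b), ⟨Or.inr rfl, Sym2.mem_mk_left _ _⟩, ?_⟩
        rintro e' ⟨(⟨he', hne'⟩ | rfl), hmem⟩
        · rw [Set.mem_insert_iff, not_or, Set.mem_singleton_iff] at hne'
          exact absurd ((hu0 e' ⟨he', hmem⟩).trans he0a1) hne'.1
        · rfl
      · by_cases hvG : v = G2 dirs b
        · subst hvG
          have he0a2 : e0 = s(G2 dirs b, Q dirs b) :=
            (hu0 _ ⟨ha2, Sym2.mem_mk_left _ _⟩).symm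
          refine ⟨s(C dirs b, G2 dirs b), ⟨Or.inr rfl, Sym2.mem_mk_right _ _⟩, ?_⟩
          rintro e' ⟨(⟨he', hne'⟩ | rfl), hmem⟩
          · rw [Set.mem_insert_iff, not_or, Set.mem_singleton_iff] at hne'
            exact absurd ((hu0 e' ⟨he', hmem⟩).trans he0a2) hne'.2
          · rfl
        · have h0n1 : e0 ≠ s(C dirs b, P dirs b) := by
            rintro rfl
            rw [Sym2.mem_iff] at hv0
            rcases hv0 with h | h; exacts [hvC h, hvP h]
          have h0n2 : e0 ≠ s(G2 dirs b, Q dirs b) := by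
            rintro rfl
            rw [Sym2.mem_iff] at hv0
            rcases hv0 with h | h; exacts [hvG h, hvQ h]
          refine ⟨e0, ⟨Or.inl ⟨he0, by
            rw [Set.mem_insert_iff, not_or, Set.mem_singleton_iff]; exact ⟨h0n1, h0n2⟩⟩, hv0⟩, ?_⟩
          rintro e' ⟨(⟨he', -⟩ | rfl), hmem⟩
          · exact hu0 e' ⟨he', hmem⟩
          · rw [Sym2.mem_iff] at hmem
            rcases hmem with h | h; exacts [absurd h hvC, absurd h hvG]
    · have hgmem : s(C dirs b, G2 dirs b) ∈
          (E' \ {s(C dirs b, P dirs b), s(G2 dirs b, Q dirs b)}) ∪ {s(C dirs b, G2 dirs b)} :=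
        Or.inr rfl
      rw [newE, if_pos hgmem]
      ext x
      simp only [Set.mem_union, Set.mem_diff, Set.mem_singleton_iff, Set.mem_insert_iff]
      constructor
      · rintro (⟨(⟨hx, -⟩ | rfl), hxg⟩ | (rfl | rfl))
        · exact hx
        · exact absurd rfl hxg
        · exact ha1
        · exact ha2
      · intro hx
        by_cases hx1 : x = s(C dirs b, P dirs b)
        · exact Or.inr (Or.inl hx1)
        · by_cases hx2 : x = s(G2 dirs b, Q dirs b)
          · exact Or.inr (Or.inr hx2)
          · exact Or.inl ⟨Or.inl ⟨hx, not_or.2 ⟨hx1, hx2⟩⟩, by rintro rfl; exact hgE' hx⟩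

lemma newE_inj {dirs : List Bool} {b : Bool} {E1 E2 : Set (Sym2 (ℤ × ℤ))}
    (h1 : Good dirs E1) (h2 : Good dirs E2)
    (heq : newE dirs b E1 = newE dirs b E2) : E1 = E2 := by
  obtain ⟨m1, m2, m3, m4, m5, m6⟩ := ne_edges dirs b
  have na11 : s(C dirs b, P dirs b) ∉ E1 := a1_not_old h1
  have na12 : s(C dirs b, P dirs b) ∉ E2 := a1_not_old h2
  have na21 : s(G2 dirs b, Q dirs b) ∉ E1 := a2_not_old h1
  have na22 : s(G2 dirs b, Q dirs b) ∉ E2 := a2_not_old h2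
  have nf1 : s(P dirs b, Q dirs b) ∉ E1 := f_not_old h1
  have nf2 : s(P dirs b, Q dirs b) ∉ E2 := f_not_old h2
  by_cases g1 : s(C dirs b, G2 dirs b) ∈ E1 <;> by_cases g2 : s(C dirs b, G2 dirs b) ∈ E2
  · simp only [newE, if_pos g1, if_pos g2] at heq
    ext x
    have hx := Set.ext_iff.1 heq x
    simp only [Set.mem_union, Set.mem_diff, Set.mem_singleton_iff, Set.mem_insert_iff] at hx
    by_cases h : x = s(C dirs b, G2 dirs b)
    · subst h; exact ⟨fun _ => g2, fun _ => g1⟩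
    · by_cases ha : x = s(C dirs b, P dirs b)
      · subst ha; exact ⟨fun h' => absurd h' na11, fun h' => absurd h' na12⟩
      · by_cases hb : x = s(G2 dirs b, Q dirs b)
        · subst hb; exact ⟨fun h' => absurd h' na21, fun h' => absurd h' na22⟩
        · tauto
  · exfalso
    simp only [newE, if_pos g1, if_neg g2] at heq
    have : s(C dirs b, P dirs b) ∈ E2 ∪ {s(P dirs b, Q dirs b)} := by
      rw [← heq]; exact Or.inr (Or.inl rfl)
    rcases this with h | h; exacts [na12 h, m5 h]
  · exfalso
    simp only [newE, if_neg g1, if_pos g2] at heq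
    have : s(C dirs b, P dirs b) ∈ E1 ∪ {s(P dirs b, Q dirs b)} := by
      rw [heq]; exact Or.inr (Or.inl rfl)
    rcases this with h | h; exacts [na11 h, m5 h]
  · simp only [newE, if_neg g1, if_neg g2] at heq
    ext x
    have hx := Set.ext_iff.1 heq x
    simp only [Set.mem_union, Set.mem_singleton_iff] at hx
    by_cases h : x = s(P dirs b, Q dirs b)
    · subst h; exact ⟨fun h' => absurd h' nf1, fun h' => absurd h' nf2⟩
    · tauto


/-! ### Base case: a single tile -/

def pt00 : ℤ × ℤ := (0, 0)
def pt10 : ℤ × ℤ := (1, 0)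
def pt01 : ℤ × ℤ := (0, 1)
def pt11 : ℤ × ℤ := (1, 1)

def eBot : Sym2 (ℤ × ℤ) := s(pt00, pt10)
def eTop : Sym2 (ℤ × ℤ) := s(pt01, pt11)
def eLeft : Sym2 (ℤ × ℤ) := s(pt00, pt01)
def eRight : Sym2 (ℤ × ℤ) := s(pt10, pt11)

lemma snakeCorner_nil (k : ℕ) : snakeCorner [] k = pt00 := by
  simp [snakeCorner, pt00, Prod.ext_iff]

lemma verts_nil {v : ℤ × ℤ} : v ∈ snakeVerts [] ↔ IsTileCorner v pt00 := by
  constructor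
  · rintro ⟨k, hk, h⟩; rwa [snakeCorner_nil] at h
  · intro h; exact ⟨0, le_rfl, by rwa [snakeCorner_nil]⟩

lemma pts_corner : IsTileCorner pt00 pt00 ∧ IsTileCorner pt10 pt00 ∧
    IsTileCorner pt01 pt00 ∧ IsTileCorner pt11 pt00 := by
  refine ⟨?_, ?_, ?_, ?_⟩ <;> rw [corner_iff] <;> simp [pt00, pt10, pt01, pt11]

lemma pts_ne_nil : pt00 ≠ pt10 ∧ pt00 ≠ pt01 ∧ pt00 ≠ pt11 ∧ pt10 ≠ pt01 ∧
    pt10 ≠ pt11 ∧ pt01 ≠ pt11 := by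
  refine ⟨?_, ?_, ?_, ?_, ?_, ?_⟩ <;> simp [pt00, pt10, pt01, pt11, Prod.ext_iff]

lemma edgeOK_nil {e : Sym2 (ℤ × ℤ)} (h : EdgeOK [] e) :
    e = eBot ∨ e = eTop ∨ e = eLeft ∨ e = eRight := by
  obtain ⟨u, v, rfl, huv, ⟨k, hk, hu, hv⟩, -⟩ := h
  rw [snakeCorner_nil] at hu hv
  have hs := side_cases hu hv huv
  rw [show pt00 + ((1 : ℤ), (0 : ℤ)) = pt10 from by simp [pt00, pt10, Prod.ext_iff],
    show pt00 + ((0 : ℤ), (1 : ℤ)) = pt01 from by simp [pt00, pt01, Prod.ext_iff],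
    show pt00 + ((1 : ℤ), (1 : ℤ)) = pt11 from by simp [pt00, pt11, Prod.ext_iff]] at hs
  exact hs

lemma edgeOK_nil_all : EdgeOK [] eBot ∧ EdgeOK [] eTop ∧ EdgeOK [] eLeft ∧ EdgeOK [] eRight := by
  obtain ⟨c0, c1, c2, c3⟩ := pts_corner
  refine ⟨⟨pt00, pt10, rfl, ?_, ⟨0, le_rfl, by rw [snakeCorner_nil]; exact c0,
      by rw [snakeCorner_nil]; exact c1⟩, ?_⟩,
    ⟨pt01, pt11, rfl, ?_, ⟨0, le_rfl, by rw [snakeCorner_nil]; exact c2,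
      by rw [snakeCorner_nil]; exact c3⟩, ?_⟩,
    ⟨pt00, pt01, rfl, ?_, ⟨0, le_rfl, by rw [snakeCorner_nil]; exact c0,
      by rw [snakeCorner_nil]; exact c2⟩, ?_⟩,
    ⟨pt10, pt11, rfl, ?_, ⟨0, le_rfl, by rw [snakeCorner_nil]; exact c1,
      by rw [snakeCorner_nil]; exact c3⟩, ?_⟩⟩ <;>
  first
    | (rw [unitAdj_iff]; simp [pt00, pt10, pt01, pt11])
    | (intro k k' hk hk' _ _ _ _; simp only [List.length_nil, Nat.le_zero] at hk hk'; omega)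

lemma mem_sides : (pt00 ∈ eBot ∧ pt10 ∈ eBot ∧ pt01 ∉ eBot ∧ pt11 ∉ eBot) ∧
    (pt01 ∈ eTop ∧ pt11 ∈ eTop ∧ pt00 ∉ eTop ∧ pt10 ∉ eTop) ∧
    (pt00 ∈ eLeft ∧ pt01 ∈ eLeft ∧ pt10 ∉ eLeft ∧ pt11 ∉ eLeft) ∧
    (pt10 ∈ eRight ∧ pt11 ∈ eRight ∧ pt00 ∉ eRight ∧ pt01 ∉ eRight) := by
  obtain ⟨q1, q2, q3, q4, q5, q6⟩ := pts_ne_nil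
  refine ⟨⟨Sym2.mem_mk_left _ _, Sym2.mem_mk_right _ _, ?_, ?_⟩,
    ⟨Sym2.mem_mk_left _ _, Sym2.mem_mk_right _ _, ?_, ?_⟩,
    ⟨Sym2.mem_mk_left _ _, Sym2.mem_mk_right _ _, ?_, ?_⟩,
    ⟨Sym2.mem_mk_left _ _, Sym2.mem_mk_right _ _, ?_, ?_⟩⟩ <;>
    simp only [eBot, eTop, eLeft, eRight, Sym2.mem_iff] <;> push_neg
  · exact ⟨Ne.symm q2, Ne.symm q4⟩
  · exact ⟨Ne.symm q3, Ne.symm q5⟩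
  · exact ⟨q2, q3⟩
  · exact ⟨q4, q5⟩
  · exact ⟨Ne.symm q1, q4⟩
  · exact ⟨Ne.symm q3, Ne.symm q6⟩
  · exact ⟨q1, q3⟩
  · exact ⟨Ne.symm q4, q6⟩

lemma ne_sides : eBot ≠ eTop ∧ eBot ≠ eLeft ∧ eBot ≠ eRight ∧ eTop ≠ eLeft ∧
    eTop ≠ eRight ∧ eLeft ≠ eRight := by
  obtain ⟨q1, q2, q3, q4, q5, q6⟩ := pts_ne_nil
  refine ⟨?_, ?_, ?_, ?_, ?_, ?_⟩ <;> simp only [eBot, eTop, eLeft, eRight] <;> intro h <;>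
    rw [Sym2.eq_iff] at h
  · rcases h with ⟨h1, -⟩ | ⟨h1, -⟩; exacts [q2 h1, q3 h1]
  · rcases h with ⟨-, h2⟩ | ⟨h1, -⟩; exacts [q4 h2, q2 h1]
  · rcases h with ⟨h1, -⟩ | ⟨h1, -⟩; exacts [q1 h1, q3 h1]
  · rcases h with ⟨h1, -⟩ | ⟨-, h2⟩; exacts [q2 h1.symm, q3 h2.symm]
  · rcases h with ⟨h1, -⟩ | ⟨h1, -⟩; exacts [q4 h1.symm, q6 h1]
  · rcases h with ⟨h1, -⟩ | ⟨h1, -⟩; exacts [q1 h1, q3 h1]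

def EA : Set (Sym2 (ℤ × ℤ)) := {eBot, eTop}
def EB : Set (Sym2 (ℤ × ℤ)) := {eLeft, eRight}

lemma good_EA : Good [] EA := by
  obtain ⟨o1, o2, o3, o4⟩ := edgeOK_nil_all
  obtain ⟨⟨b1, b2, b3, b4⟩, ⟨t1, t2, t3, t4⟩, ⟨l1, l2, l3, l4⟩, ⟨r1, r2, r3, r4⟩⟩ := mem_sides
  constructor
  · rintro e (rfl | rfl); exacts [o1, o2]
  · intro v hv
    rw [verts_nil, corner_iff] at hv
    have h4 : v = pt00 ∨ v = pt10 ∨ v = pt01 ∨ v = pt11 := by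
      simp only [pt00, pt10, pt01, pt11, Prod.ext_iff]
      simp only [pt00] at hv
      norm_num at hv ⊢
      omega
    rcases h4 with rfl | rfl | rfl | rfl
    · exact ⟨eBot, ⟨Or.inl rfl, b1⟩, by rintro e' ⟨(rfl | rfl), hm⟩; exacts [rfl, absurd hm t3]⟩
    · exact ⟨eBot, ⟨Or.inl rfl, b2⟩, by rintro e' ⟨(rfl | rfl), hm⟩; exacts [rfl, absurd hm t4]⟩
    · exact ⟨eTop, ⟨Or.inr rfl, t1⟩, by rintro e' ⟨(rfl | rfl), hm⟩; exacts [absurd hm b3, rfl]⟩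
    · exact ⟨eTop, ⟨Or.inr rfl, t2⟩, by rintro e' ⟨(rfl | rfl), hm⟩; exacts [absurd hm b4, rfl]⟩

lemma good_EB : Good [] EB := by
  obtain ⟨o1, o2, o3, o4⟩ := edgeOK_nil_all
  obtain ⟨⟨b1, b2, b3, b4⟩, ⟨t1, t2, t3, t4⟩, ⟨l1, l2, l3, l4⟩, ⟨r1, r2, r3, r4⟩⟩ := mem_sides
  constructor
  · rintro e (rfl | rfl); exacts [o3, o4]
  · intro v hv
    rw [verts_nil, corner_iff] at hv
    have h4 : v = pt00 ∨ v = pt10 ∨ v = pt01 ∨ v = pt11 := by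
      simp only [pt00, pt10, pt01, pt11, Prod.ext_iff]
      simp only [pt00] at hv
      norm_num at hv ⊢
      omega
    rcases h4 with rfl | rfl | rfl | rfl
    · exact ⟨eLeft, ⟨Or.inl rfl, l1⟩, by rintro e' ⟨(rfl | rfl), hm⟩; exacts [rfl, absurd hm r3]⟩
    · exact ⟨eRight, ⟨Or.inr rfl, r1⟩, by rintro e' ⟨(rfl | rfl), hm⟩; exacts [absurd hm l3, rfl]⟩
    · exact ⟨eLeft, ⟨Or.inl rfl, l2⟩, by rintro e' ⟨(rfl | rfl), hm⟩; exacts [rfl, absurd hm r4]⟩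
    · exact ⟨eRight, ⟨Or.inr rfl, r2⟩, by rintro e' ⟨(rfl | rfl), hm⟩; exacts [absurd hm l4, rfl]⟩

lemma good_nil_eq {E : Set (Sym2 (ℤ × ℤ))} (hE : Good [] E) : E = EA ∨ E = EB := by
  obtain ⟨⟨b1, b2, b3, b4⟩, ⟨t1, t2, t3, t4⟩, ⟨l1, l2, l3, l4⟩, ⟨r1, r2, r3, r4⟩⟩ := mem_sides
  obtain ⟨s1, s2, s3, s4, s5, s6⟩ := ne_sides
  obtain ⟨c0, c1, c2, c3⟩ := pts_corner
  have hv00 : pt00 ∈ snakeVerts [] := verts_nil.2 c0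
  have hv10 : pt10 ∈ snakeVerts [] := verts_nil.2 c1
  have hv01 : pt01 ∈ snakeVerts [] := verts_nil.2 c2
  obtain ⟨e0, ⟨he0, h00⟩, hu00⟩ := hE.2 pt00 hv00
  have he04 := edgeOK_nil (hE.1 _ he0)
  rcases he04 with rfl | rfl | rfl | rfl
  · -- eBot ∈ E : E = EA
    left
    obtain ⟨e1, ⟨he1, h01⟩, hu01⟩ := hE.2 pt01 hv01
    have he14 := edgeOK_nil (hE.1 _ he1)
    have he1T : eTop ∈ E := by
      rcases he14 with rfl | rfl | rfl | rfl
      · exact absurd h01 b3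
      · exact he1
      · exact absurd (hu00 eLeft ⟨he1, l1⟩) (Ne.symm s2)
      · exact absurd h01 r4
    ext e
    constructor
    · intro he
      rcases edgeOK_nil (hE.1 e he) with rfl | rfl | rfl | rfl
      · exact Or.inl rfl
      · exact Or.inr rfl
      · exact absurd (hu00 eLeft ⟨he, l1⟩) (Ne.symm s2)
      · obtain ⟨e2, ⟨he2, h102⟩, hu10⟩ := hE.2 pt10 hv10
        have hb := hu10 eBot ⟨he0, b2⟩
        have hr := hu10 eRight ⟨he, r1⟩
        exact absurd (hb.trans hr.symm) s3
    · rintro (rfl | rfl); exacts [he0, he1T]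
  · exact absurd h00 t3
  · -- eLeft ∈ E : E = EB
    right
    obtain ⟨e2, ⟨he2, h102⟩, hu10⟩ := hE.2 pt10 hv10
    have he2R : eRight ∈ E := by
      rcases edgeOK_nil (hE.1 _ he2) with rfl | rfl | rfl | rfl
      · exact absurd (hu00 eBot ⟨he2, b1⟩) s2
      · exact absurd h102 t4
      · exact absurd h102 l3
      · exact he2
    ext e
    constructor
    · intro he
      rcases edgeOK_nil (hE.1 e he) with rfl | rfl | rfl | rfl
      · exact absurd (hu00 eBot ⟨he, b1⟩) s2
      · obtain ⟨e3, ⟨he3, h013⟩, hu01⟩ := hE.2 pt01 hv01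
        have hl := hu01 eLeft ⟨he0, l2⟩
        have ht := hu01 eTop ⟨he, t1⟩
        exact absurd (ht.trans hl.symm) s4
      · exact Or.inl rfl
      · exact Or.inr rfl
    · rintro (rfl | rfl); exacts [he0, he2R]
  · exact absurd h00 r3

lemma good_nil_ncard : {E | Good [] E}.ncard = 2 := by
  obtain ⟨s1, s2, s3, s4, s5, s6⟩ := ne_sides
  have hset : {E | Good [] E} = {EA, EB} := by
    ext E
    constructor
    · intro h
      rcases good_nil_eq h with rfl | rfl
      · exact Or.inl rfl
      · exact Or.inr rfl
    · rintro (rfl | rfl); exacts [good_EA, good_EB]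
  rw [hset]
  refine Set.ncard_pair ?_
  intro h
  have : eBot ∈ EB := h ▸ (Or.inl rfl : eBot ∈ EA)
  rcases this with h' | h'; exacts [s2 h', s3 h']

lemma good_ncard (dirs : List Bool) : {E | Good dirs E}.ncard = 2 := by
  induction dirs using List.reverseRecOn with
  | nil => exact good_nil_ncard
  | append_singleton dirs b ih =>
    have himg : {E | Good (dirs ++ [b]) E} = newE dirs b '' {E | Good dirs E} := by
      ext E'
      constructor
      · intro h
        obtain ⟨E, hg, he⟩ := good_restrict h
        exact ⟨E, hg, he⟩
      · rintro ⟨E, hg, rfl⟩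
        exact good_newE hg
    have hinj : Set.InjOn (newE dirs b) {E | Good dirs E} :=
      fun E1 h1 E2 h2 heq => newE_inj h1 h2 heq
    rw [himg, Set.ncard_image_of_injOn hinj]
    exact ih


/-! ### Transfer between subgraph matchings and edge sets -/

lemma unitAdj_symm {u v : ℤ × ℤ} (h : UnitAdj u v) : UnitAdj v u := by
  unfold UnitAdj at h ⊢; tauto

lemma boundary_symm {dirs : List Bool} {u v : ℤ × ℤ} (h : IsBoundaryEdge dirs u v) :
    IsBoundaryEdge dirs v u :=
  fun k k' hk hk' h1 h2 h3 h4 => h k k' hk hk' h2 h1 h4 h3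

variable {dirs : List Bool}

/-- the edge-set of a subgraph, pushed down to `ℤ × ℤ` -/
noncomputable def F (dirs : List Bool) (M : (snakeGraph dirs).Subgraph) : Set (Sym2 (ℤ × ℤ)) :=
  Sym2.map Subtype.val '' M.edgeSet

lemma adj_of_F_eq {M N : (snakeGraph dirs).Subgraph} (h : F dirs M = F dirs N)
    {u v : ↥(snakeVerts dirs)} (hadj : M.Adj u v) : N.Adj u v := by
  have hmem : s(u.1, v.1) ∈ F dirs N := by
    rw [← h]
    exact ⟨s(u, v), SimpleGraph.Subgraph.mem_edgeSet.2 hadj, Sym2.map_pair_eq _ _ _⟩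
  obtain ⟨e, heN, hemap⟩ := hmem
  induction e using Sym2.ind with
  | _ a b =>
    rw [Sym2.map_pair_eq, Sym2.eq_iff] at hemap
    have hab := SimpleGraph.Subgraph.mem_edgeSet.1 heN
    rcases hemap with ⟨h1, h2⟩ | ⟨h1, h2⟩
    · rwa [Subtype.ext h1, Subtype.ext h2] at hab
    · rw [Subtype.ext h1, Subtype.ext h2] at hab
      exact hab.symm

lemma F_good {M : (snakeGraph dirs).Subgraph}
    (hM : M.IsPerfectMatching ∧ ∀ u v, M.Adj u v → IsBoundaryEdge dirs u.1 v.1) :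
    Good dirs (F dirs M) := by
  constructor
  · rintro e ⟨e0, he0, rfl⟩
    induction e0 using Sym2.ind with
    | _ a b =>
      have hadj := SimpleGraph.Subgraph.mem_edgeSet.1 he0
      have hsub := M.adj_sub hadj
      rw [Sym2.map_pair_eq]
      exact ⟨a.1, b.1, rfl, hsub.1, hsub.2, hM.2 a b hadj⟩
  · intro v hv
    obtain ⟨w, hw, huw⟩ := hM.1.1 (hM.1.2 ⟨v, hv⟩)
    refine ⟨s(v, w.1), ⟨⟨s(⟨v, hv⟩, w), SimpleGraph.Subgraph.mem_edgeSet.2 hw,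
      Sym2.map_pair_eq _ _ _⟩, Sym2.mem_mk_left _ _⟩, ?_⟩
    rintro e' ⟨⟨e0, he0, rfl⟩, hvmem⟩
    induction e0 using Sym2.ind with
    | _ a b =>
      have hadj := SimpleGraph.Subgraph.mem_edgeSet.1 he0
      rw [Sym2.map_pair_eq] at hvmem ⊢
      rw [Sym2.mem_iff] at hvmem
      rcases hvmem with h1 | h1
      · have ha : a = ⟨v, hv⟩ := Subtype.ext h1.symm
        subst ha
        have hb := huw b hadj
        rw [hb]
      · have hb : b = ⟨v, hv⟩ := Subtype.ext h1.symm
        subst hb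
        have ha := huw a (M.adj_symm hadj)
        rw [ha]
        exact Sym2.eq_swap
    
lemma good_F {E : Set (Sym2 (ℤ × ℤ))} (hGood : Good dirs E) :
    ∃ M : (snakeGraph dirs).Subgraph,
      (M.IsPerfectMatching ∧ ∀ u v, M.Adj u v → IsBoundaryEdge dirs u.1 v.1) ∧ F dirs M = E := by
  have hadj_sub : ∀ {u v : ↥(snakeVerts dirs)}, s(u.1, v.1) ∈ E → (snakeGraph dirs).Adj u v := by
    intro u v h
    obtain ⟨a, b, heq, hunit, ⟨k, hk, ha, hb⟩, hbd⟩ := hGood.1 _ h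
    rw [Sym2.eq_iff] at heq
    rcases heq with ⟨h1, h2⟩ | ⟨h1, h2⟩
    · exact ⟨h1 ▸ h2 ▸ hunit, k, hk, h1 ▸ ha, h2 ▸ hb⟩
    · exact ⟨unitAdj_symm (h1 ▸ h2 ▸ hunit), k, hk, h1 ▸ hb, h2 ▸ ha⟩
  refine ⟨⟨Set.univ, fun u v => s(u.1, v.1) ∈ E, fun h => hadj_sub h,
    fun _ => Set.mem_univ _, ⟨fun u v h => by show s(v.1, u.1) ∈ E; rw [Sym2.eq_swap]; exact h⟩⟩, ⟨⟨?_, fun v => trivial⟩, ?_⟩, ?_⟩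
  · -- IsMatching
    rintro ⟨v, hv⟩ -
    obtain ⟨e, ⟨heE, hve⟩, hu⟩ := hGood.2 v hv
    obtain ⟨a, b, rfl, hunit, ⟨k, hk, ha, hb⟩, hbd⟩ := hGood.1 _ heE
    rw [Sym2.mem_iff] at hve
    rcases hve with h1 | h1
    · refine ⟨⟨b, mem_verts hk hb⟩, ?_, ?_⟩
      · show s(v, b) ∈ E
        rw [h1]; exact heE
      · rintro ⟨w, hw⟩ hadj
        have h2 := hu s(v, w) ⟨hadj, Sym2.mem_mk_left _ _⟩
        rw [Sym2.eq_iff] at h2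
        apply Subtype.ext
        show w = b
        rcases h2 with ⟨-, hh⟩ | ⟨hh1, hh2⟩
        · exact hh
        · rw [hh2, ← h1]; exact hh1
    · refine ⟨⟨a, mem_verts hk ha⟩, ?_, ?_⟩
      · show s(v, a) ∈ E
        rw [h1, Sym2.eq_swap]; exact heE
      · rintro ⟨w, hw⟩ hadj
        have h2 := hu s(v, w) ⟨hadj, Sym2.mem_mk_left _ _⟩
        rw [Sym2.eq_iff] at h2
        apply Subtype.ext
        show w = a
        rcases h2 with ⟨hh1, hh2⟩ | ⟨-, hh⟩
        · rw [hh2, ← h1]; exact hh1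
        · exact hh
  · -- boundary
    intro u v hadj
    obtain ⟨a, b, heq, hunit, -, hbd⟩ := hGood.1 _ hadj
    rw [Sym2.eq_iff] at heq
    rcases heq with ⟨h1, h2⟩ | ⟨h1, h2⟩
    · exact h1 ▸ h2 ▸ hbd
    · exact boundary_symm (h1 ▸ h2 ▸ hbd)
  · -- F M = E
    ext e
    constructor
    · rintro ⟨e0, he0, rfl⟩
      induction e0 using Sym2.ind with
      | _ a b =>
        rw [Sym2.map_pair_eq]
        exact SimpleGraph.Subgraph.mem_edgeSet.1 he0
    · intro he
      obtain ⟨a, b, rfl, hunit, ⟨k, hk, ha, hb⟩, -⟩ := hGood.1 _ he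
      exact ⟨s(⟨a, mem_verts hk ha⟩, ⟨b, mem_verts hk hb⟩),
        SimpleGraph.Subgraph.mem_edgeSet.2 he, Sym2.map_pair_eq _ _ _⟩

end SnakeAux

/-- Every snake graph has exactly two perfect matchings consisting entirely of
boundary edges (the minimal and the maximal matching). -/
theorem snake_two_boundary_matchings (dirs : List Bool) :
    {M : (snakeGraph dirs).Subgraph |
      M.IsPerfectMatching ∧ ∀ u v, M.Adj u v → IsBoundaryEdge dirs u.1 v.1}.ncard = 2 := by
  classical
  have hinj : Set.InjOn (SnakeAux.F dirs)
      {M : (snakeGraph dirs).Subgraph |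
        M.IsPerfectMatching ∧ ∀ u v, M.Adj u v → IsBoundaryEdge dirs u.1 v.1} := by
    intro M hM N hN h
    refine SimpleGraph.Subgraph.ext ?_ ?_
    · rw [SimpleGraph.Subgraph.isSpanning_iff.1 hM.1.2, SimpleGraph.Subgraph.isSpanning_iff.1 hN.1.2]
    · funext u v
      exact propext ⟨SnakeAux.adj_of_F_eq h, SnakeAux.adj_of_F_eq h.symm⟩
  have himg : SnakeAux.F dirs ''
      {M : (snakeGraph dirs).Subgraph |
        M.IsPerfectMatching ∧ ∀ u v, M.Adj u v → IsBoundaryEdge dirs u.1 v.1} =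
      {E | SnakeAux.Good dirs E} := by
    ext E
    constructor
    · rintro ⟨M, hM, rfl⟩
      exact SnakeAux.F_good hM
    · intro hE
      obtain ⟨M, hM, hFE⟩ := SnakeAux.good_F hE
      exact ⟨M, hM, hFE⟩
  rw [← Set.ncard_image_of_injOn hinj, himg]
  exact SnakeAux.good_ncard dirs
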